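/- Let X, U be finite, P a transition kernel Lipschitz in (μ,ν) with constant L_P, and let π_t be policies satisfying |π_t(x, μ₁) − π_t(x, μ₂)|₁ ≤ L_Q |μ₁ − μ₂|₁ for all x, μ₁, μ₂. Let μ_t^N be the empirical state distribution of the N-agent process driven by the policy sequence {π_t} from initial distribution μ₀, and let μ_t^∞ be the deterministic mean-field flow defined by μ_{t+1}^∞ = P^MF(μ_t^∞, π_t) with μ_0^∞ = μ₀. Then for all t ≥ 0, E|μ_t^N − μ_t^∞|₁ ≤ (C_P/√N)(√(|X|) + √(|U|)) · (S_P^t − 1)/(S_P − 1), where C_P = 2 + L_P and S_P = (1 + 2L_P) + L_Q(1 + L_P). -/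

import Mathlib

open Finset

def IsPmf {X : Type*} [Fintype X] (μ : X → ℝ) : Prop :=
  (∀ x, 0 ≤ μ x) ∧ ∑ x, μ x = 1

noncomputable def l1 {X : Type*} [Fintype X] (f : X → ℝ) : ℝ := ∑ x, |f x|

/-- Empirical distribution of a configuration of `N` agents. -/
noncomputable def emp {X : Type*} [Fintype X] [DecidableEq X] {N : ℕ}
    (s : Fin N → X) : X → ℝ :=
  fun x => (∑ i, if s i = x then (1 : ℝ) else 0) / N

/-- The mean-field action distribution `ν^MF(μ, π)`. -/
noncomputable def nuMF {X U : Type*} [Fintype X] [Fintype U]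
    (μ : X → ℝ) (π : X → (X → ℝ) → U → ℝ) : U → ℝ :=
  fun u => ∑ x, π x μ u * μ x

/-- The one-step mean-field state distribution update `P^MF(μ, π)`. -/
noncomputable def PMF' {X U : Type*} [Fintype X] [Fintype U]
    (P : X → U → (X → ℝ) → (U → ℝ) → X → ℝ)
    (μ : X → ℝ) (π : X → (X → ℝ) → U → ℝ) : X → ℝ :=
  fun y => ∑ x, ∑ u, P x u μ (nuMF μ π) y * π x μ u * μ x

/-- Law of the `N`-agent joint-state process at time `t`, started from the deterministic
joint state `x₀`: at each step agents sample actions independently via `π t` and transition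
independently via `P`. -/
noncomputable def Wproc {X U : Type*} [Fintype X] [Fintype U] [DecidableEq X] [DecidableEq U]
    {N : ℕ} (P : X → U → (X → ℝ) → (U → ℝ) → X → ℝ)
    (π : ℕ → X → (X → ℝ) → U → ℝ) (x₀ : Fin N → X) : ℕ → (Fin N → X) → ℝ
  | 0 => fun s => if s = x₀ then 1 else 0
  | t + 1 => fun s' => ∑ s : Fin N → X, Wproc P π x₀ t s *
      ∑ a : Fin N → U, (∏ i, π t (s i) (emp s) (a i)) *
        ∏ i, P (s i) (a i) (emp s) (emp a) (s' i)

/-- Deterministic mean-field flow of state distributions. -/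
noncomputable def muFlow {X U : Type*} [Fintype X] [Fintype U]
    (P : X → U → (X → ℝ) → (U → ℝ) → X → ℝ)
    (π : ℕ → X → (X → ℝ) → U → ℝ) (μ₀ : X → ℝ) : ℕ → X → ℝ
  | 0 => μ₀
  | t + 1 => PMF' P (muFlow P π μ₀ t) (π t)


-- ## Auxiliary lemmas

lemma l1_nonneg {X : Type*} [Fintype X] (f : X → ℝ) : 0 ≤ l1 f :=
  Finset.sum_nonneg fun _ _ => abs_nonneg _

lemma l1_tri {X : Type*} [Fintype X] (f g h : X → ℝ) :
    l1 (fun y => f y - h y) ≤ l1 (fun y => f y - g y) + l1 (fun y => g y - h y) := by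
  rw [l1, l1, l1, ← Finset.sum_add_distrib]
  refine Finset.sum_le_sum fun y _ => ?_
  have : f y - h y = (f y - g y) + (g y - h y) := by ring
  rw [this]; exact abs_add_le _ _

lemma l1_self {X : Type*} [Fintype X] (f : X → ℝ) : l1 (fun y => f y - f y) = 0 := by
  simp [l1]

-- product over functions = sums factorize
lemma sum_prod_eq {A : Type*} [Fintype A] {N : ℕ} (f : Fin N → A → ℝ) :
    ∑ a : Fin N → A, ∏ i, f i (a i) = ∏ i, ∑ b, f i b := by
  rw [Finset.prod_univ_sum]
  rw [Fintype.piFinset_univ]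

lemma prod_single {M : Type*} [CommMonoid M] {N : ℕ} (g : Fin N → M) (i : Fin N)
    (hg : ∀ k, k ≠ i → g k = 1) : ∏ k, g k = g i :=
  Finset.prod_eq_single_of_mem i (mem_univ i) (fun k _ hk => hg k hk)

lemma prod_pair {M : Type*} [CommMonoid M] {N : ℕ} (g : Fin N → M) (i j : Fin N)
    (hij : i ≠ j) (hg : ∀ k, k ≠ i → k ≠ j → g k = 1) : ∏ k, g k = g i * g j := by
  rw [← Finset.mul_prod_erase univ g (mem_univ i),
    ← Finset.mul_prod_erase _ g (Finset.mem_erase.2 ⟨hij.symm, mem_univ j⟩),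
    ← mul_assoc]
  rw [Finset.prod_eq_one, mul_one]
  intro k hk
  simp only [Finset.mem_erase, Finset.mem_univ, and_true] at hk
  exact hg k hk.2 hk.1

lemma expect_one {A : Type*} [Fintype A] {N : ℕ} (p : Fin N → A → ℝ)
    (hp1 : ∀ k, ∑ b, p k b = 1) (i : Fin N) (φ : A → ℝ) :
    ∑ a : Fin N → A, (∏ k, p k (a k)) * φ (a i) = ∑ b, p i b * φ b := by
  have key : ∀ a : Fin N → A, (∏ k, p k (a k)) * φ (a i)
      = ∏ k, (p k (a k) * if k = i then φ (a k) else 1) := by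
    intro a
    rw [Finset.prod_mul_distrib, Finset.prod_ite_eq']
    simp
  simp_rw [key]
  rw [sum_prod_eq (fun k b => p k b * if k = i then φ b else 1)]
  rw [prod_single _ i]
  · simp
  · intro k hk
    simp only [if_neg hk, mul_one]
    exact hp1 k

lemma expect_two {A : Type*} [Fintype A] {N : ℕ} (p : Fin N → A → ℝ)
    (hp1 : ∀ k, ∑ b, p k b = 1) (i j : Fin N) (hij : i ≠ j) (φ ψ : A → ℝ) :
    ∑ a : Fin N → A, (∏ k, p k (a k)) * (φ (a i) * ψ (a j))
      = (∑ b, p i b * φ b) * (∑ b, p j b * ψ b) := by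
  have key : ∀ a : Fin N → A, (∏ k, p k (a k)) * (φ (a i) * ψ (a j))
      = ∏ k, (p k (a k) * ((if k = i then φ (a k) else 1) * (if k = j then ψ (a k) else 1))) := by
    intro a
    rw [Finset.prod_mul_distrib, Finset.prod_mul_distrib, Finset.prod_ite_eq',
      Finset.prod_ite_eq']
    simp [mul_assoc]
  simp_rw [key]
  rw [sum_prod_eq (fun k b => p k b * ((if k = i then φ b else 1) * if k = j then ψ b else 1))]
  rw [prod_pair _ i j hij]
  · simp [if_neg hij, if_neg hij.symm]
  · intro k hki hkj
    simp only [if_neg hki, if_neg hkj, mul_one]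
    exact hp1 k

lemma expect_abs_le_sqrt {ι : Type*} [Fintype ι] (w z : ι → ℝ) (hw : ∀ i, 0 ≤ w i)
    (hw1 : ∑ i, w i = 1) :
    ∑ i, w i * |z i| ≤ Real.sqrt (∑ i, w i * z i ^ 2) := by
  have h := Finset.sum_mul_sq_le_sq_mul_sq univ (fun i => Real.sqrt (w i))
      (fun i => Real.sqrt (w i) * |z i|)
  have e1 : ∀ i : ι, Real.sqrt (w i) * (Real.sqrt (w i) * |z i|) = w i * |z i| := by
    intro i; rw [← mul_assoc, Real.mul_self_sqrt (hw i)]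
  have e2 : ∀ i : ι, Real.sqrt (w i) ^ 2 = w i := fun i => Real.sq_sqrt (hw i)
  have e3 : ∀ i : ι, (Real.sqrt (w i) * |z i|) ^ 2 = w i * z i ^ 2 := by
    intro i; rw [mul_pow, Real.sq_sqrt (hw i), sq_abs]
  simp only [e1, e2, e3, hw1, one_mul] at h
  have hnn : 0 ≤ ∑ i, w i * |z i| :=
    Finset.sum_nonneg fun i _ => mul_nonneg (hw i) (abs_nonneg _)
  rw [Real.le_sqrt hnn (Finset.sum_nonneg fun i _ => mul_nonneg (hw i) (sq_nonneg _))]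
  exact h

lemma sum_sqrt_le {ι : Type*} [Fintype ι] (S : ι → ℝ) (hS : ∀ i, 0 ≤ S i) :
    ∑ i, Real.sqrt (S i) ≤ Real.sqrt (Fintype.card ι) * Real.sqrt (∑ i, S i) := by
  have h := Finset.sum_mul_sq_le_sq_mul_sq univ (fun _ => (1:ℝ)) (fun i => Real.sqrt (S i))
  simp only [one_mul, one_pow, Finset.sum_const, Finset.card_univ, nsmul_eq_mul, mul_one] at h
  have e : ∀ i : ι, Real.sqrt (S i) ^ 2 = S i := fun i => Real.sq_sqrt (hS i)
  simp only [e] at h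
  have hnn : 0 ≤ ∑ i, Real.sqrt (S i) := Finset.sum_nonneg fun i _ => Real.sqrt_nonneg _
  calc ∑ i, Real.sqrt (S i) = Real.sqrt ((∑ i, Real.sqrt (S i)) ^ 2) := (Real.sqrt_sq hnn).symm
    _ ≤ Real.sqrt ((Fintype.card ι : ℝ) * ∑ i, S i) := Real.sqrt_le_sqrt h
    _ = Real.sqrt (Fintype.card ι) * Real.sqrt (∑ i, S i) := Real.sqrt_mul (by positivity) _

/-- Main fluctuation lemma: the expected L1 deviation of an empirical average of independent
bounded random vectors from its mean. -/
lemma fluct {A Y : Type*} [Fintype A] [Fintype Y] {N : ℕ} (hN : 0 < N)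
    (p : Fin N → A → ℝ) (hp : ∀ i, IsPmf (p i))
    (f : Fin N → A → Y → ℝ) (hf0 : ∀ i a y, 0 ≤ f i a y) (hf1 : ∀ i a y, f i a y ≤ 1)
    (hfs : ∀ i a, ∑ y, f i a y = 1) :
    ∑ a : Fin N → A, (∏ i, p i (a i)) *
        l1 (fun y => (∑ i, f i (a i) y) / N - (∑ i, ∑ b, p i b * f i b y) / N)
      ≤ Real.sqrt (Fintype.card Y) / Real.sqrt N := by
  set m : Fin N → Y → ℝ := fun i y => ∑ b, p i b * f i b y with hm
  have hNR : (0:ℝ) < N := Nat.cast_pos.2 hN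
  have hp1 : ∀ k, ∑ b, p k b = 1 := fun k => (hp k).2
  have hw0 : ∀ a : Fin N → A, 0 ≤ ∏ i, p i (a i) :=
    fun a => Finset.prod_nonneg fun i _ => (hp i).1 _
  have hw1 : ∑ a : Fin N → A, ∏ i, p i (a i) = 1 := by
    rw [sum_prod_eq]; simp [hp1]
  have hm0 : ∀ i y, 0 ≤ m i y := fun i y =>
    Finset.sum_nonneg fun b _ => mul_nonneg ((hp i).1 b) (hf0 i b y)
  -- mean zero of centered variables
  have hcmean : ∀ i y, ∑ b, p i b * (f i b y - m i y) = 0 := by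
    intro i y
    have : ∀ b, p i b * (f i b y - m i y) = p i b * f i b y - m i y * p i b := by
      intro b; ring
    simp only [this, Finset.sum_sub_distrib, ← Finset.mul_sum, hp1 i, mul_one]
    simp [hm]
  -- second moment of centered variable bounded by mean
  have hcsq : ∀ i y, ∑ b, p i b * (f i b y - m i y) ^ 2 ≤ m i y := by
    intro i y
    have expand : ∀ b, p i b * (f i b y - m i y) ^ 2
        = p i b * f i b y * f i b y - 2 * m i y * (p i b * f i b y) + m i y ^ 2 * p i b := by
      intro b; ring
    simp only [expand, Finset.sum_add_distrib, Finset.sum_sub_distrib, ← Finset.mul_sum,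
      hp1 i, mul_one]
    have h1 : ∑ b, p i b * f i b y * f i b y ≤ ∑ b, p i b * f i b y := by
      refine Finset.sum_le_sum fun b _ => ?_
      exact mul_le_of_le_one_right (mul_nonneg ((hp i).1 b) (hf0 i b y)) (hf1 i b y)
    nlinarith [hm0 i y, h1, sq_nonneg (m i y)]
  -- per-y second moment of the average
  have hsecond : ∀ y, ∑ a : Fin N → A, (∏ i, p i (a i)) *
      ((∑ i, f i (a i) y) / N - (∑ i, m i y) / N) ^ 2 ≤ (∑ i, m i y) / N ^ 2 := by
    intro y
    have key : ∀ a : Fin N → A, ((∑ i, f i (a i) y) / N - (∑ i, m i y) / N) ^ 2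
        = (∑ i, (f i (a i) y - m i y)) ^ 2 / (N:ℝ) ^ 2 := by
      intro a
      rw [div_sub_div_same, ← Finset.sum_sub_distrib, div_pow]
    simp_rw [key]
    have expand : ∀ a : Fin N → A, (∏ i, p i (a i)) *
        ((∑ i, (f i (a i) y - m i y)) ^ 2 / (N:ℝ) ^ 2)
        = (∑ i, ∑ j, (∏ k, p k (a k)) * ((f i (a i) y - m i y) * (f j (a j) y - m j y)))
          / (N:ℝ) ^ 2 := by
      intro a
      rw [sq, Finset.sum_mul_sum, ← mul_div_assoc]
      simp_rw [Finset.mul_sum]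
    simp_rw [expand]
    rw [← Finset.sum_div]
    gcongr
    rw [Finset.sum_comm]
    have inner : ∀ i : Fin N, ∑ j : Fin N, ∑ a : Fin N → A,
        (∏ k, p k (a k)) * ((f i (a i) y - m i y) * (f j (a j) y - m j y))
        ≤ m i y := by
      intro i
      have diag : ∑ a : Fin N → A, (∏ k, p k (a k)) *
          ((f i (a i) y - m i y) * (f i (a i) y - m i y))
          = ∑ b, p i b * (f i b y - m i y) ^ 2 := by
        have := expect_one p hp1 i (fun b => (f i b y - m i y) ^ 2)
        simp only [sq] at this ⊢
        exact this
      have off : ∀ j, j ≠ i → ∑ a : Fin N → A, (∏ k, p k (a k)) *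
          ((f i (a i) y - m i y) * (f j (a j) y - m j y)) = 0 := by
        intro j hj
        rw [expect_two p hp1 i j (Ne.symm hj) (fun b => f i b y - m i y)
          (fun b => f j b y - m j y)]
        rw [hcmean i y, zero_mul]
      rw [Finset.sum_eq_single_of_mem i (mem_univ i) (fun j _ hj => off j hj)]
      rw [diag]
      exact hcsq i y
    exact Finset.sum_le_sum fun i _ => by rw [Finset.sum_comm]; exact inner i
  -- assemble
  have hSnn : ∀ y, 0 ≤ ∑ i, m i y := fun y => Finset.sum_nonneg fun i _ => hm0 i y
  have hsN : (0:ℝ) < Real.sqrt N := Real.sqrt_pos.2 hNR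
  simp only [l1, Finset.mul_sum]
  rw [Finset.sum_comm]
  have step : ∀ y, (∑ a : Fin N → A, (∏ i, p i (a i)) *
      |(∑ i, f i (a i) y) / N - (∑ i, ∑ b, p i b * f i b y) / N|)
      ≤ Real.sqrt (∑ i, m i y) / N := by
    intro y
    have h1 := expect_abs_le_sqrt (fun a : Fin N → A => ∏ i, p i (a i))
      (fun a => (∑ i, f i (a i) y) / N - (∑ i, m i y) / N) hw0 hw1
    refine h1.trans ?_
    have h3 : Real.sqrt (∑ a : Fin N → A, (∏ i, p i (a i)) *
        ((∑ i, f i (a i) y) / N - (∑ i, m i y) / N) ^ 2)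
        ≤ Real.sqrt ((∑ i, m i y) / (N:ℝ) ^ 2) := Real.sqrt_le_sqrt (hsecond y)
    refine h3.trans ?_
    rw [Real.sqrt_div (hSnn y), Real.sqrt_sq hNR.le]
  have total : ∑ y, ∑ i, m i y = (N : ℝ) := by
    rw [Finset.sum_comm]
    have h4 : ∀ i : Fin N, ∑ y, m i y = 1 := by
      intro i
      simp only [hm]
      rw [Finset.sum_comm]
      simp_rw [← Finset.mul_sum, hfs, mul_one]
      exact hp1 i
    simp [h4]
  have hNs : Real.sqrt N * Real.sqrt N = (N:ℝ) := Real.mul_self_sqrt hNR.le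
  calc ∑ y, ∑ a : Fin N → A, (∏ i, p i (a i)) *
        |(∑ i, f i (a i) y) / N - (∑ i, ∑ b, p i b * f i b y) / N|
      ≤ ∑ y, Real.sqrt (∑ i, m i y) / N := Finset.sum_le_sum fun y _ => step y
    _ = (∑ y, Real.sqrt (∑ i, m i y)) / N := by rw [Finset.sum_div]
    _ ≤ (Real.sqrt (Fintype.card Y) * Real.sqrt (∑ y, ∑ i, m i y)) / N := by
        gcongr
        exact sum_sqrt_le _ hSnn
    _ = Real.sqrt (Fintype.card Y) / Real.sqrt N := by
        rw [total, div_eq_div_iff (ne_of_gt hNR) (ne_of_gt hsN), mul_assoc, hNs]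

lemma l1_nonneg' {X : Type*} [Fintype X] (f : X → ℝ) : 0 ≤ l1 f :=
  Finset.sum_nonneg fun _ _ => abs_nonneg _

lemma emp_pmf {X : Type*} [Fintype X] [DecidableEq X] {N : ℕ} (hN : 0 < N)
    (s : Fin N → X) : IsPmf (emp s) := by
  constructor
  · intro x
    apply div_nonneg _ (Nat.cast_nonneg N)
    exact Finset.sum_nonneg fun i _ => by positivity
  · have hNR : (0:ℝ) < N := Nat.cast_pos.2 hN
    simp only [emp]
    rw [← Finset.sum_div]
    rw [Finset.sum_comm]
    have h : ∀ i : Fin N, ∑ x, (if s i = x then (1:ℝ) else 0) = 1 := by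
      intro i; rw [Finset.sum_ite_eq]; simp
    simp [h, hNR.ne']

lemma emp_avg {X : Type*} [Fintype X] [DecidableEq X] {N : ℕ}
    (s : Fin N → X) (g : X → ℝ) : ∑ x, g x * emp s x = (∑ i, g (s i)) / N := by
  simp only [emp]
  simp_rw [← mul_div_assoc]
  rw [← Finset.sum_div]
  congr 1
  simp_rw [Finset.mul_sum]
  rw [Finset.sum_comm]
  refine Finset.sum_congr rfl fun i _ => ?_
  simp [mul_ite, Finset.sum_ite_eq]

lemma nuMF_pmf {X U : Type*} [Fintype X] [Fintype U] (μ : X → ℝ)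
    (π : X → (X → ℝ) → U → ℝ) (hμ : IsPmf μ) (hπ : ∀ x, IsPmf (π x μ)) :
    IsPmf (nuMF μ π) := by
  constructor
  · intro u
    exact Finset.sum_nonneg fun x _ => mul_nonneg ((hπ x).1 u) (hμ.1 x)
  · show ∑ u, ∑ x, π x μ u * μ x = 1
    rw [Finset.sum_comm]
    simp_rw [← Finset.sum_mul]
    have h : ∀ x, (∑ u, π x μ u) * μ x = μ x := by
      intro x; rw [(hπ x).2, one_mul]
    simp_rw [h]
    exact hμ.2

lemma PMF'_pmf {X U : Type*} [Fintype X] [Fintype U]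
    (P : X → U → (X → ℝ) → (U → ℝ) → X → ℝ) (μ : X → ℝ) (π : X → (X → ℝ) → U → ℝ)
    (hμ : IsPmf μ) (hπ : ∀ x, IsPmf (π x μ))
    (hP : ∀ x u, IsPmf (P x u μ (nuMF μ π))) : IsPmf (PMF' P μ π) := by
  constructor
  · intro y
    exact Finset.sum_nonneg fun x _ => Finset.sum_nonneg fun u _ =>
      mul_nonneg (mul_nonneg ((hP x u).1 y) ((hπ x).1 u)) (hμ.1 x)
  · show ∑ y, ∑ x, ∑ u, P x u μ (nuMF μ π) y * π x μ u * μ x = 1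
    rw [Finset.sum_comm]
    have h : ∀ x, ∑ y, ∑ u, P x u μ (nuMF μ π) y * π x μ u * μ x = μ x := by
      intro x
      rw [Finset.sum_comm]
      have h2 : ∀ u, ∑ y, P x u μ (nuMF μ π) y * π x μ u * μ x = π x μ u * μ x := by
        intro u
        rw [← Finset.sum_mul, ← Finset.sum_mul, (hP x u).2, one_mul]
      simp_rw [h2, ← Finset.sum_mul, (hπ x).2, one_mul]
    simp_rw [h]
    exact hμ.2

lemma nuMF_lip {X U : Type*} [Fintype X] [Fintype U] (L_Q : ℝ)
    (π' : X → (X → ℝ) → U → ℝ) (μ₁ μ₂ : X → ℝ) (h₁ : IsPmf μ₁) (h₂ : IsPmf μ₂)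
    (hπ₂ : ∀ x, IsPmf (π' x μ₂))
    (hLip : ∀ x, l1 (fun u => π' x μ₁ u - π' x μ₂ u) ≤ L_Q * l1 (fun x' => μ₁ x' - μ₂ x')) :
    l1 (fun u => nuMF μ₁ π' u - nuMF μ₂ π' u) ≤ (1 + L_Q) * l1 (fun x' => μ₁ x' - μ₂ x') := by
  have key : ∀ u, |nuMF μ₁ π' u - nuMF μ₂ π' u|
      ≤ ∑ x, (|π' x μ₁ u - π' x μ₂ u| * μ₁ x + π' x μ₂ u * |μ₁ x - μ₂ x|) := by
    intro u
    have e : nuMF μ₁ π' u - nuMF μ₂ π' u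
        = ∑ x, ((π' x μ₁ u - π' x μ₂ u) * μ₁ x + π' x μ₂ u * (μ₁ x - μ₂ x)) := by
      simp only [nuMF, ← Finset.sum_sub_distrib]
      refine Finset.sum_congr rfl fun x _ => by ring
    rw [e]
    refine (Finset.abs_sum_le_sum_abs _ _).trans ?_
    refine Finset.sum_le_sum fun x _ => ?_
    refine (abs_add_le _ _).trans ?_
    rw [abs_mul, abs_mul, abs_of_nonneg (h₁.1 x), abs_of_nonneg ((hπ₂ x).1 u)]
  calc l1 (fun u => nuMF μ₁ π' u - nuMF μ₂ π' u)
      ≤ ∑ u, ∑ x, (|π' x μ₁ u - π' x μ₂ u| * μ₁ x + π' x μ₂ u * |μ₁ x - μ₂ x|) :=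
        Finset.sum_le_sum fun u _ => key u
    _ = ∑ x, μ₁ x * (∑ u, |π' x μ₁ u - π' x μ₂ u|)
        + ∑ x, |μ₁ x - μ₂ x| * (∑ u, π' x μ₂ u) := by
        rw [Finset.sum_comm]
        simp_rw [Finset.sum_add_distrib]
        congr 1
        · exact Finset.sum_congr rfl fun x _ => by rw [← Finset.sum_mul, mul_comm]
        · exact Finset.sum_congr rfl fun x _ => by rw [← Finset.sum_mul, mul_comm]
    _ ≤ ∑ x, μ₁ x * (L_Q * l1 (fun x' => μ₁ x' - μ₂ x')) + ∑ x, |μ₁ x - μ₂ x| * 1 := by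
        refine add_le_add (Finset.sum_le_sum fun x _ => ?_) (Finset.sum_le_sum fun x _ => ?_)
        · exact mul_le_mul_of_nonneg_left (hLip x) (h₁.1 x)
        · rw [(hπ₂ x).2]
    _ = (1 + L_Q) * l1 (fun x' => μ₁ x' - μ₂ x') := by
        rw [← Finset.sum_mul, h₁.2, one_mul]
        simp only [mul_one, l1]
        ring

lemma PMF'_lip {X U : Type*} [Fintype X] [Fintype U] (L_P L_Q : ℝ) (hLP : 0 ≤ L_P)
    (P : X → U → (X → ℝ) → (U → ℝ) → X → ℝ) (π' : X → (X → ℝ) → U → ℝ)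
    (μ₁ μ₂ : X → ℝ) (h₁ : IsPmf μ₁) (h₂ : IsPmf μ₂)
    (hπ₁ : ∀ x, IsPmf (π' x μ₁)) (hπ₂ : ∀ x, IsPmf (π' x μ₂))
    (hP₂ : ∀ x u, IsPmf (P x u μ₂ (nuMF μ₂ π')))
    (hPLip : ∀ x u, l1 (fun y => P x u μ₁ (nuMF μ₁ π') y - P x u μ₂ (nuMF μ₂ π') y)
        ≤ L_P * (l1 (fun x' => μ₁ x' - μ₂ x') + l1 (fun u' => nuMF μ₁ π' u' - nuMF μ₂ π' u')))
    (hπLip : ∀ x, l1 (fun u => π' x μ₁ u - π' x μ₂ u) ≤ L_Q * l1 (fun x' => μ₁ x' - μ₂ x'))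
    (hνLip : l1 (fun u' => nuMF μ₁ π' u' - nuMF μ₂ π' u')
        ≤ (1 + L_Q) * l1 (fun x' => μ₁ x' - μ₂ x')) :
    l1 (fun y => PMF' P μ₁ π' y - PMF' P μ₂ π' y)
      ≤ ((1 + 2 * L_P) + L_Q * (1 + L_P)) * l1 (fun x' => μ₁ x' - μ₂ x') := by
  set D := l1 (fun x' => μ₁ x' - μ₂ x') with hD
  set T := l1 (fun u' => nuMF μ₁ π' u' - nuMF μ₂ π' u') with hT
  have hD0 : 0 ≤ D := l1_nonneg' _
  have step1 : l1 (fun y => PMF' P μ₁ π' y - PMF' P μ₂ π' y)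
      ≤ ∑ x, ∑ u, ∑ y, |P x u μ₁ (nuMF μ₁ π') y * π' x μ₁ u * μ₁ x
          - P x u μ₂ (nuMF μ₂ π') y * π' x μ₂ u * μ₂ x| := by
    rw [l1]
    have h : ∀ y, |PMF' P μ₁ π' y - PMF' P μ₂ π' y|
        ≤ ∑ x, ∑ u, |P x u μ₁ (nuMF μ₁ π') y * π' x μ₁ u * μ₁ x
          - P x u μ₂ (nuMF μ₂ π') y * π' x μ₂ u * μ₂ x| := by
      intro y
      have e : PMF' P μ₁ π' y - PMF' P μ₂ π' y = ∑ x, ∑ u,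
          (P x u μ₁ (nuMF μ₁ π') y * π' x μ₁ u * μ₁ x
            - P x u μ₂ (nuMF μ₂ π') y * π' x μ₂ u * μ₂ x) := by
        simp only [PMF', ← Finset.sum_sub_distrib]
      rw [e]
      refine (Finset.abs_sum_le_sum_abs _ _).trans ?_
      exact Finset.sum_le_sum fun x _ => Finset.abs_sum_le_sum_abs _ _
    refine (Finset.sum_le_sum fun y _ => h y).trans ?_
    rw [Finset.sum_comm]
    exact le_of_eq (Finset.sum_congr rfl fun x _ => Finset.sum_comm)
  have step2 : ∀ x u, ∑ y, |P x u μ₁ (nuMF μ₁ π') y * π' x μ₁ u * μ₁ x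
      - P x u μ₂ (nuMF μ₂ π') y * π' x μ₂ u * μ₂ x|
      ≤ L_P * (D + T) * (π' x μ₁ u * μ₁ x)
        + |π' x μ₁ u - π' x μ₂ u| * μ₁ x + π' x μ₂ u * |μ₁ x - μ₂ x| := by
    intro x u
    have hbound : ∀ y, |P x u μ₁ (nuMF μ₁ π') y * π' x μ₁ u * μ₁ x
        - P x u μ₂ (nuMF μ₂ π') y * π' x μ₂ u * μ₂ x|
        ≤ |P x u μ₁ (nuMF μ₁ π') y - P x u μ₂ (nuMF μ₂ π') y| * (π' x μ₁ u * μ₁ x)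
          + P x u μ₂ (nuMF μ₂ π') y * (|π' x μ₁ u - π' x μ₂ u| * μ₁ x
            + π' x μ₂ u * |μ₁ x - μ₂ x|) := by
      intro y
      have e : P x u μ₁ (nuMF μ₁ π') y * π' x μ₁ u * μ₁ x
          - P x u μ₂ (nuMF μ₂ π') y * π' x μ₂ u * μ₂ x
          = (P x u μ₁ (nuMF μ₁ π') y - P x u μ₂ (nuMF μ₂ π') y) * (π' x μ₁ u * μ₁ x)
            + P x u μ₂ (nuMF μ₂ π') y * ((π' x μ₁ u - π' x μ₂ u) * μ₁ x
              + π' x μ₂ u * (μ₁ x - μ₂ x)) := by ring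
      rw [e]
      refine (abs_add_le _ _).trans ?_
      gcongr
      · rw [abs_mul, abs_of_nonneg (mul_nonneg ((hπ₁ x).1 u) (h₁.1 x))]
      · rw [abs_mul, abs_of_nonneg ((hP₂ x u).1 y)]
        refine mul_le_mul_of_nonneg_left ?_ ((hP₂ x u).1 y)
        refine (abs_add_le _ _).trans ?_
        rw [abs_mul, abs_mul, abs_of_nonneg (h₁.1 x), abs_of_nonneg ((hπ₂ x).1 u)]
    refine (Finset.sum_le_sum fun y _ => hbound y).trans ?_
    rw [Finset.sum_add_distrib, ← Finset.sum_mul, ← Finset.sum_mul, (hP₂ x u).2, one_mul]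
    have hPL : (∑ y, |P x u μ₁ (nuMF μ₁ π') y - P x u μ₂ (nuMF μ₂ π') y|)
        ≤ L_P * (D + T) := hPLip x u
    have hπμnn : 0 ≤ π' x μ₁ u * μ₁ x := mul_nonneg ((hπ₁ x).1 u) (h₁.1 x)
    nlinarith [mul_le_mul_of_nonneg_right hPL hπμnn]
  have step3 : ∑ x, ∑ u, (L_P * (D + T) * (π' x μ₁ u * μ₁ x)
      + |π' x μ₁ u - π' x μ₂ u| * μ₁ x + π' x μ₂ u * |μ₁ x - μ₂ x|)
      ≤ L_P * (D + T) + L_Q * D + D := by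
    simp_rw [Finset.sum_add_distrib]
    have t1 : ∑ x, ∑ u, L_P * (D + T) * (π' x μ₁ u * μ₁ x) = L_P * (D + T) := by
      have h : ∀ x, ∑ u, L_P * (D + T) * (π' x μ₁ u * μ₁ x) = L_P * (D + T) * μ₁ x := by
        intro x; rw [← Finset.mul_sum, ← Finset.sum_mul, (hπ₁ x).2, one_mul]
      simp_rw [h, ← Finset.mul_sum, h₁.2, mul_one]
    have t2 : ∑ x, ∑ u, |π' x μ₁ u - π' x μ₂ u| * μ₁ x ≤ L_Q * D := by
      have h : ∀ x, ∑ u, |π' x μ₁ u - π' x μ₂ u| * μ₁ x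
          ≤ L_Q * D * μ₁ x := by
        intro x
        rw [← Finset.sum_mul]
        exact mul_le_mul_of_nonneg_right (hπLip x) (h₁.1 x)
      refine (Finset.sum_le_sum fun x _ => h x).trans ?_
      rw [← Finset.mul_sum, h₁.2, mul_one]
    have t3 : ∑ x, ∑ u, π' x μ₂ u * |μ₁ x - μ₂ x| = D := by
      have h : ∀ x, ∑ u, π' x μ₂ u * |μ₁ x - μ₂ x| = |μ₁ x - μ₂ x| := by
        intro x; rw [← Finset.sum_mul, (hπ₂ x).2, one_mul]
      simp only [h]
      rfl
    rw [t1, t3]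
    linarith [t2]
  refine step1.trans ((Finset.sum_le_sum fun x _ =>
      Finset.sum_le_sum fun u _ => step2 x u).trans (step3.trans ?_))
  nlinarith [mul_le_mul_of_nonneg_left hνLip hLP, hD0, hLP]

lemma pmf_le_one {X : Type*} [Fintype X] {p : X → ℝ} (hp : IsPmf p) (x : X) : p x ≤ 1 := by
  rw [← hp.2]
  exact Finset.single_le_sum (fun y _ => hp.1 y) (Finset.mem_univ x)

/-- Lemma (propagation of chaos): the expected L1 distance between the empirical state
distribution of the `N`-agent process and the mean-field flow at time `t` is at most
`(C_P/√N)(√|X| + √|U|)(S_P^t − 1)/(S_P − 1)`,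
where `C_P = 2 + L_P` and `S_P = (1 + 2L_P) + L_Q(1 + L_P)`. -/
theorem empirical_vs_meanfield_flow_bound
    {X U : Type*} [Fintype X] [Fintype U] [DecidableEq X] [DecidableEq U]
    (N : ℕ) (hN : 0 < N)
    (L_P L_Q : ℝ) (hLP : 0 < L_P) (hLQ : 0 < L_Q)
    (P : X → U → (X → ℝ) → (U → ℝ) → X → ℝ)
    (hP : ∀ x u μ ν, IsPmf μ → IsPmf ν → IsPmf (P x u μ ν))
    (hPLip : ∀ x u μ₁ μ₂ ν₁ ν₂, IsPmf μ₁ → IsPmf μ₂ → IsPmf ν₁ → IsPmf ν₂ →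
      l1 (fun y => P x u μ₁ ν₁ y - P x u μ₂ ν₂ y)
        ≤ L_P * (l1 (fun x' => μ₁ x' - μ₂ x') + l1 (fun u' => ν₁ u' - ν₂ u')))
    (π : ℕ → X → (X → ℝ) → U → ℝ)
    (hπ : ∀ t x μ, IsPmf μ → IsPmf (π t x μ))
    (hπLip : ∀ t x μ₁ μ₂, IsPmf μ₁ → IsPmf μ₂ →
      l1 (fun u => π t x μ₁ u - π t x μ₂ u) ≤ L_Q * l1 (fun x' => μ₁ x' - μ₂ x'))
    (x₀ : Fin N → X) (μ₀ : X → ℝ) (hμ₀ : μ₀ = emp x₀) (t : ℕ) :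
    ∑ s : Fin N → X, Wproc P π x₀ t s * l1 (fun x => emp s x - muFlow P π μ₀ t x)
      ≤ ((2 + L_P) / Real.sqrt N) *
          (Real.sqrt (Fintype.card X) + Real.sqrt (Fintype.card U)) *
          ((((1 + 2 * L_P) + L_Q * (1 + L_P)) ^ t - 1) /
            (((1 + 2 * L_P) + L_Q * (1 + L_P)) - 1)) := by
  have hNR : (0:ℝ) < N := Nat.cast_pos.2 hN
  have hsN : (0:ℝ) < Real.sqrt N := Real.sqrt_pos.2 hNR
  have hempX : ∀ s : Fin N → X, IsPmf (emp s) := fun s => emp_pmf hN s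
  rcases isEmpty_or_nonempty U with hU | hU
  · exfalso
    have h1 : IsPmf (π 0 (x₀ ⟨0, hN⟩) (emp x₀)) := hπ 0 _ _ (hempX x₀)
    have h2 := h1.2
    rw [Finset.univ_eq_empty, Finset.sum_empty] at h2
    norm_num at h2
  have hempU : ∀ a : Fin N → U, IsPmf (emp a) := fun a => emp_pmf hN a
  set S : ℝ := (1 + 2 * L_P) + L_Q * (1 + L_P) with hSdef
  have hS1 : 1 < S := by nlinarith
  have hS0 : (0:ℝ) ≤ S := by nlinarith
  have hflow : ∀ k, IsPmf (muFlow P π μ₀ k) := by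
    intro k
    induction k with
    | zero => exact hμ₀ ▸ hempX x₀
    | succ k ih =>
      exact PMF'_pmf P _ (π k) ih (fun x => hπ k x _ ih)
        (fun x u => hP x u _ _ ih (nuMF_pmf _ _ ih (fun x => hπ k x _ ih)))
  have hπw : ∀ (k : ℕ) (s : Fin N → X) (a : Fin N → U),
      0 ≤ ∏ i, π k (s i) (emp s) (a i) :=
    fun k s a => Finset.prod_nonneg fun i _ => (hπ k (s i) _ (hempX s)).1 _
  have hπw1 : ∀ (k : ℕ) (s : Fin N → X), ∑ a : Fin N → U, ∏ i, π k (s i) (emp s) (a i) = 1 := by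
    intro k s
    rw [sum_prod_eq]
    exact Finset.prod_eq_one fun i _ => (hπ k (s i) _ (hempX s)).2
  have hPw : ∀ (k : ℕ) (s : Fin N → X) (a : Fin N → U) (s' : Fin N → X),
      0 ≤ ∏ i, P (s i) (a i) (emp s) (emp a) (s' i) :=
    fun k s a s' => Finset.prod_nonneg fun i _ => (hP _ _ _ _ (hempX s) (hempU a)).1 _
  have hPw1 : ∀ (s : Fin N → X) (a : Fin N → U),
      ∑ s' : Fin N → X, ∏ i, P (s i) (a i) (emp s) (emp a) (s' i) = 1 := by
    intro s a
    rw [sum_prod_eq]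
    exact Finset.prod_eq_one fun i _ => (hP _ _ _ _ (hempX s) (hempU a)).2
  have hW : ∀ k, (∀ s, 0 ≤ Wproc P π x₀ k s) ∧ (∑ s, Wproc P π x₀ k s) = 1 := by
    intro k
    induction k with
    | zero =>
      constructor
      · intro s; simp only [Wproc]; split <;> norm_num
      · simp [Wproc, Finset.sum_ite_eq']
    | succ k ih =>
      constructor
      · intro s'
        simp only [Wproc]
        refine Finset.sum_nonneg fun s _ => mul_nonneg (ih.1 s) ?_
        exact Finset.sum_nonneg fun a _ => mul_nonneg (hπw k s a) (hPw k s a s')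
      · simp only [Wproc]
        rw [Finset.sum_comm]
        have h : ∀ s, ∑ s' : Fin N → X, Wproc P π x₀ k s *
            ∑ a : Fin N → U, (∏ i, π k (s i) (emp s) (a i)) *
              ∏ i, P (s i) (a i) (emp s) (emp a) (s' i) = Wproc P π x₀ k s := by
          intro s
          rw [← Finset.mul_sum]
          rw [Finset.sum_comm]
          have h2 : ∀ a : Fin N → U, ∑ s' : Fin N → X,
              (∏ i, π k (s i) (emp s) (a i)) * ∏ i, P (s i) (a i) (emp s) (emp a) (s' i)
              = ∏ i, π k (s i) (emp s) (a i) := by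
            intro a; rw [← Finset.mul_sum, hPw1 s a, mul_one]
          rw [Finset.sum_congr rfl fun a _ => h2 a, hπw1 k s, mul_one]
        rw [Finset.sum_congr rfl fun s _ => h s, ih.2]
  set B : ℝ := 2 * (Real.sqrt (Fintype.card X) / Real.sqrt N)
      + L_P * (Real.sqrt (Fintype.card U) / Real.sqrt N) with hBdef
  have hB0 : 0 ≤ B := by positivity
  -- the one-step recursion
  have key : ∀ k, (∑ s : Fin N → X, Wproc P π x₀ (k+1) s *
        l1 (fun x => emp s x - muFlow P π μ₀ (k+1) x))
      ≤ S * (∑ s : Fin N → X, Wproc P π x₀ k s *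
          l1 (fun x => emp s x - muFlow P π μ₀ k x)) + B := by
    intro k
    have expand : (∑ s' : Fin N → X, Wproc P π x₀ (k+1) s' *
          l1 (fun x => emp s' x - muFlow P π μ₀ (k+1) x))
        = ∑ s : Fin N → X, Wproc P π x₀ k s * ∑ a : Fin N → U,
            (∏ i, π k (s i) (emp s) (a i)) *
            ∑ s' : Fin N → X, (∏ i, P (s i) (a i) (emp s) (emp a) (s' i)) *
              l1 (fun x => emp s' x - muFlow P π μ₀ (k+1) x) := by
      simp only [Wproc]
      simp_rw [Finset.sum_mul]
      rw [Finset.sum_comm]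
      refine Finset.sum_congr rfl fun s _ => ?_
      simp_rw [mul_assoc]
      rw [← Finset.mul_sum]
      congr 1
      simp_rw [Finset.sum_mul]
      rw [Finset.sum_comm]
      refine Finset.sum_congr rfl fun a _ => ?_
      simp_rw [mul_assoc]
      rw [← Finset.mul_sum]
    rw [expand]
    have perS : ∀ s : Fin N → X,
        (∑ a : Fin N → U, (∏ i, π k (s i) (emp s) (a i)) *
          ∑ s' : Fin N → X, (∏ i, P (s i) (a i) (emp s) (emp a) (s' i)) *
            l1 (fun x => emp s' x - muFlow P π μ₀ (k+1) x))
        ≤ B + S * l1 (fun x => emp s x - muFlow P π μ₀ k x) := by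
      intro s
      have hπs : ∀ x, IsPmf (π k x (emp s)) := fun x => hπ k x _ (hempX s)
      have hνp : IsPmf (nuMF (emp s) (π k)) := nuMF_pmf _ _ (hempX s) hπs
      have hμkp : IsPmf (muFlow P π μ₀ k) := hflow k
      have hπkp : ∀ x, IsPmf (π k x (muFlow P π μ₀ k)) := fun x => hπ k x _ hμkp
      have hνkp : IsPmf (nuMF (muFlow P π μ₀ k) (π k)) := nuMF_pmf _ _ hμkp hπkp
      -- (1) fluctuation of the empirical next-state distribution
      have T1bound : ∀ a : Fin N → U, ∑ s' : Fin N → X,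
          (∏ i, P (s i) (a i) (emp s) (emp a) (s' i)) *
            l1 (fun y => emp s' y - (∑ i, P (s i) (a i) (emp s) (emp a) y) / N)
          ≤ Real.sqrt (Fintype.card X) / Real.sqrt N := by
        intro a
        have h := fluct hN (fun i => P (s i) (a i) (emp s) (emp a))
          (fun i => hP _ _ _ _ (hempX s) (hempU a))
          (fun i x' y => if x' = y then (1:ℝ) else 0)
          (by intro i b y; split <;> norm_num)
          (by intro i b y; split <;> norm_num)
          (by intro i b; rw [Finset.sum_ite_eq]; simp)
        have e : ∀ s' : Fin N → X, (fun y => emp s' y -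
              (∑ i, P (s i) (a i) (emp s) (emp a) y) / ↑N)
            = (fun y => (∑ i, if s' i = y then (1:ℝ) else 0) / ↑N -
              (∑ i, ∑ b, P (s i) (a i) (emp s) (emp a) b * if b = y then (1:ℝ) else 0) / ↑N) := by
          intro s'; funext y
          simp [emp, mul_ite, Finset.sum_ite_eq']
        simp_rw [e]
        exact h
      -- (2) fluctuation of the empirical action distribution
      have fluct2 : ∑ a : Fin N → U, (∏ i, π k (s i) (emp s) (a i)) *
          l1 (fun u => emp a u - nuMF (emp s) (π k) u)
          ≤ Real.sqrt (Fintype.card U) / Real.sqrt N := by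
        have h := fluct hN (fun i => π k (s i) (emp s)) (fun i => hπs (s i))
          (fun i b u => if b = u then (1:ℝ) else 0)
          (by intro i b u; split <;> norm_num)
          (by intro i b u; split <;> norm_num)
          (by intro i b; rw [Finset.sum_ite_eq]; simp)
        have e : ∀ a : Fin N → U, (fun u => emp a u - nuMF (emp s) (π k) u)
            = (fun u => (∑ i, if a i = u then (1:ℝ) else 0) / ↑N -
                (∑ i, ∑ b, π k (s i) (emp s) b * if b = u then (1:ℝ) else 0) / ↑N) := by
          intro a; funext u
          have h1 : nuMF (emp s) (π k) u = (∑ i, π k (s i) (emp s) u) / ↑N :=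
            emp_avg s (fun x => π k x (emp s) u)
          rw [h1]
          simp [emp, mul_ite, Finset.sum_ite_eq']
        simp_rw [e]
        exact h
      -- (3) fluctuation of the mean-next-state under mean-field actions
      have fluct3 : ∑ a : Fin N → U, (∏ i, π k (s i) (emp s) (a i)) *
          l1 (fun y => (∑ i, P (s i) (a i) (emp s) (nuMF (emp s) (π k)) y) / ↑N -
            PMF' P (emp s) (π k) y)
          ≤ Real.sqrt (Fintype.card X) / Real.sqrt N := by
        have h := fluct hN (fun i => π k (s i) (emp s)) (fun i => hπs (s i))
          (fun i b y => P (s i) b (emp s) (nuMF (emp s) (π k)) y)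
          (fun i b y => (hP _ _ _ _ (hempX s) hνp).1 y)
          (fun i b y => pmf_le_one (hP _ _ _ _ (hempX s) hνp) y)
          (fun i b => (hP _ _ _ _ (hempX s) hνp).2)
        have e : ∀ a : Fin N → U,
            (fun y => (∑ i, P (s i) (a i) (emp s) (nuMF (emp s) (π k)) y) / ↑N -
              PMF' P (emp s) (π k) y)
            = (fun y => (∑ i, P (s i) (a i) (emp s) (nuMF (emp s) (π k)) y) / ↑N -
              (∑ i, ∑ b, π k (s i) (emp s) b *
                P (s i) b (emp s) (nuMF (emp s) (π k)) y) / ↑N) := by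
          intro a; funext y
          congr 1
          have h1 : PMF' P (emp s) (π k) y
              = ∑ x, (∑ u, P x u (emp s) (nuMF (emp s) (π k)) y * π k x (emp s) u) * emp s x := by
            simp only [PMF', Finset.sum_mul]
          rw [h1, emp_avg s (fun x => ∑ u, P x u (emp s) (nuMF (emp s) (π k)) y * π k x (emp s) u)]
          congr 1
          refine Finset.sum_congr rfl fun i _ => Finset.sum_congr rfl fun b _ => ?_
          ring
        simp_rw [e]
        exact h
      -- (4) kernel replacement bound
      have T2bound : ∀ a : Fin N → U,
          l1 (fun y => (∑ i, P (s i) (a i) (emp s) (emp a) y) / ↑N -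
            (∑ i, P (s i) (a i) (emp s) (nuMF (emp s) (π k)) y) / ↑N)
          ≤ L_P * l1 (fun u => emp a u - nuMF (emp s) (π k) u) := by
        intro a
        have hstep : ∀ y, |(∑ i, P (s i) (a i) (emp s) (emp a) y) / ↑N -
            (∑ i, P (s i) (a i) (emp s) (nuMF (emp s) (π k)) y) / ↑N|
            ≤ (∑ i, |P (s i) (a i) (emp s) (emp a) y -
              P (s i) (a i) (emp s) (nuMF (emp s) (π k)) y|) / ↑N := by
          intro y
          rw [div_sub_div_same, ← Finset.sum_sub_distrib, abs_div, abs_of_nonneg hNR.le]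
          exact div_le_div_of_nonneg_right (Finset.abs_sum_le_sum_abs _ _) hNR.le
        refine (Finset.sum_le_sum fun y (_ : y ∈ univ) => hstep y).trans ?_
        rw [← Finset.sum_div, Finset.sum_comm]
        have hper : ∀ i : Fin N, ∑ y, |P (s i) (a i) (emp s) (emp a) y -
            P (s i) (a i) (emp s) (nuMF (emp s) (π k)) y|
            ≤ L_P * l1 (fun u => emp a u - nuMF (emp s) (π k) u) := by
          intro i
          have h := hPLip (s i) (a i) (emp s) (emp s) (emp a) (nuMF (emp s) (π k))
            (hempX s) (hempX s) (hempU a) hνp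
          rw [l1_self, zero_add] at h
          exact h
        refine (div_le_div_of_nonneg_right (Finset.sum_le_sum fun i _ => hper i) hNR.le).trans ?_
        rw [Finset.sum_const, Finset.card_univ, Fintype.card_fin, nsmul_eq_mul]
        rw [mul_comm (N:ℝ), mul_div_assoc, div_self hNR.ne', mul_one]
      -- (5) Lipschitz step for the mean-field operator
      have T4bound : l1 (fun y => PMF' P (emp s) (π k) y - muFlow P π μ₀ (k+1) y)
          ≤ S * l1 (fun x => emp s x - muFlow P π μ₀ k x) := by
        have hmf : muFlow P π μ₀ (k+1) = PMF' P (muFlow P π μ₀ k) (π k) := rfl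
        rw [hmf, hSdef]
        exact PMF'_lip L_P L_Q hLP.le P (π k) (emp s) (muFlow P π μ₀ k) (hempX s) hμkp
          hπs hπkp (fun x u => hP x u _ _ hμkp hνkp)
          (fun x u => hPLip x u _ _ _ _ (hempX s) hμkp hνp hνkp)
          (fun x => hπLip k x _ _ (hempX s) hμkp)
          (nuMF_lip L_Q (π k) (emp s) (muFlow P π μ₀ k) (hempX s) hμkp hπkp
            (fun x => hπLip k x _ _ (hempX s) hμkp))
      -- pointwise triangle inequality
      have tri : ∀ (a : Fin N → U) (s' : Fin N → X),
          l1 (fun x => emp s' x - muFlow P π μ₀ (k+1) x)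
          ≤ l1 (fun y => emp s' y - (∑ i, P (s i) (a i) (emp s) (emp a) y) / ↑N)
            + (L_P * l1 (fun u => emp a u - nuMF (emp s) (π k) u)
              + l1 (fun y => (∑ i, P (s i) (a i) (emp s) (nuMF (emp s) (π k)) y) / ↑N -
                  PMF' P (emp s) (π k) y)
              + S * l1 (fun x => emp s x - muFlow P π μ₀ k x)) := by
        intro a s'
        have t1 := l1_tri (fun x => emp s' x)
          (fun y => (∑ i, P (s i) (a i) (emp s) (emp a) y) / ↑N)
          (fun x => muFlow P π μ₀ (k+1) x)
        have t2 := l1_tri (fun y => (∑ i, P (s i) (a i) (emp s) (emp a) y) / ↑N)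
          (fun y => (∑ i, P (s i) (a i) (emp s) (nuMF (emp s) (π k)) y) / ↑N)
          (fun x => muFlow P π μ₀ (k+1) x)
        have t3 := l1_tri (fun y => (∑ i, P (s i) (a i) (emp s) (nuMF (emp s) (π k)) y) / ↑N)
          (fun y => PMF' P (emp s) (π k) y)
          (fun x => muFlow P π μ₀ (k+1) x)
        have t4 := T2bound a
        refine t1.trans (add_le_add_right ?_ _)
        refine t2.trans ?_
        refine (add_le_add t4 (t3.trans (add_le_add_right T4bound _))).trans ?_
        exact le_of_eq (add_assoc _ _ _).symm
      -- assemble the conditional expectations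
      have inner_le : ∀ a : Fin N → U,
          (∑ s' : Fin N → X, (∏ i, P (s i) (a i) (emp s) (emp a) (s' i)) *
            l1 (fun x => emp s' x - muFlow P π μ₀ (k+1) x))
          ≤ (∑ s' : Fin N → X, (∏ i, P (s i) (a i) (emp s) (emp a) (s' i)) *
              l1 (fun y => emp s' y - (∑ i, P (s i) (a i) (emp s) (emp a) y) / ↑N))
            + (L_P * l1 (fun u => emp a u - nuMF (emp s) (π k) u)
              + l1 (fun y => (∑ i, P (s i) (a i) (emp s) (nuMF (emp s) (π k)) y) / ↑N -
                  PMF' P (emp s) (π k) y)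
              + S * l1 (fun x => emp s x - muFlow P π μ₀ k x)) := by
        intro a
        have h1 : ∀ s' : Fin N → X, (∏ i, P (s i) (a i) (emp s) (emp a) (s' i)) *
            l1 (fun x => emp s' x - muFlow P π μ₀ (k+1) x)
            ≤ (∏ i, P (s i) (a i) (emp s) (emp a) (s' i)) *
              (l1 (fun y => emp s' y - (∑ i, P (s i) (a i) (emp s) (emp a) y) / ↑N)
                + (L_P * l1 (fun u => emp a u - nuMF (emp s) (π k) u)
                  + l1 (fun y => (∑ i, P (s i) (a i) (emp s) (nuMF (emp s) (π k)) y) / ↑N -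
                      PMF' P (emp s) (π k) y)
                  + S * l1 (fun x => emp s x - muFlow P π μ₀ k x))) :=
          fun s' => mul_le_mul_of_nonneg_left (tri a s') (hPw k s a s')
        refine (Finset.sum_le_sum fun s' _ => h1 s').trans (le_of_eq ?_)
        have e : ∀ s' : Fin N → X, (∏ i, P (s i) (a i) (emp s) (emp a) (s' i)) *
            (l1 (fun y => emp s' y - (∑ i, P (s i) (a i) (emp s) (emp a) y) / ↑N)
              + (L_P * l1 (fun u => emp a u - nuMF (emp s) (π k) u)
                + l1 (fun y => (∑ i, P (s i) (a i) (emp s) (nuMF (emp s) (π k)) y) / ↑N -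
                    PMF' P (emp s) (π k) y)
                + S * l1 (fun x => emp s x - muFlow P π μ₀ k x)))
            = (∏ i, P (s i) (a i) (emp s) (emp a) (s' i)) *
                l1 (fun y => emp s' y - (∑ i, P (s i) (a i) (emp s) (emp a) y) / ↑N)
              + (∏ i, P (s i) (a i) (emp s) (emp a) (s' i)) *
                (L_P * l1 (fun u => emp a u - nuMF (emp s) (π k) u)
                  + l1 (fun y => (∑ i, P (s i) (a i) (emp s) (nuMF (emp s) (π k)) y) / ↑N -
                      PMF' P (emp s) (π k) y)
                  + S * l1 (fun x => emp s x - muFlow P π μ₀ k x)) :=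
          fun s' => mul_add _ _ _
        rw [Finset.sum_congr rfl fun s' _ => e s', Finset.sum_add_distrib,
          ← Finset.sum_mul, hPw1 s a, one_mul]
      -- put everything together
      have step : (∑ a : Fin N → U, (∏ i, π k (s i) (emp s) (a i)) *
          ∑ s' : Fin N → X, (∏ i, P (s i) (a i) (emp s) (emp a) (s' i)) *
            l1 (fun x => emp s' x - muFlow P π μ₀ (k+1) x))
          ≤ ∑ a : Fin N → U, ((∏ i, π k (s i) (emp s) (a i)) *
              (∑ s' : Fin N → X, (∏ i, P (s i) (a i) (emp s) (emp a) (s' i)) *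
                l1 (fun y => emp s' y - (∑ i, P (s i) (a i) (emp s) (emp a) y) / ↑N))
            + (L_P * ((∏ i, π k (s i) (emp s) (a i)) *
                l1 (fun u => emp a u - nuMF (emp s) (π k) u))
              + (∏ i, π k (s i) (emp s) (a i)) *
                l1 (fun y => (∑ i, P (s i) (a i) (emp s) (nuMF (emp s) (π k)) y) / ↑N -
                  PMF' P (emp s) (π k) y)
              + (∏ i, π k (s i) (emp s) (a i)) *
                (S * l1 (fun x => emp s x - muFlow P π μ₀ k x)))) := by
        refine Finset.sum_le_sum fun a _ => ?_
        have := mul_le_mul_of_nonneg_left (inner_le a) (hπw k s a)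
        refine this.trans (le_of_eq ?_)
        ring
      refine step.trans ?_
      rw [Finset.sum_add_distrib]
      have bnd1 : (∑ a : Fin N → U, (∏ i, π k (s i) (emp s) (a i)) *
          (∑ s' : Fin N → X, (∏ i, P (s i) (a i) (emp s) (emp a) (s' i)) *
            l1 (fun y => emp s' y - (∑ i, P (s i) (a i) (emp s) (emp a) y) / ↑N)))
          ≤ Real.sqrt (Fintype.card X) / Real.sqrt N := by
        have h : ∀ a : Fin N → U, (∏ i, π k (s i) (emp s) (a i)) *
            (∑ s' : Fin N → X, (∏ i, P (s i) (a i) (emp s) (emp a) (s' i)) *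
              l1 (fun y => emp s' y - (∑ i, P (s i) (a i) (emp s) (emp a) y) / ↑N))
            ≤ (∏ i, π k (s i) (emp s) (a i)) * (Real.sqrt (Fintype.card X) / Real.sqrt N) :=
          fun a => mul_le_mul_of_nonneg_left (T1bound a) (hπw k s a)
        refine (Finset.sum_le_sum fun a _ => h a).trans (le_of_eq ?_)
        rw [← Finset.sum_mul, hπw1 k s, one_mul]
      have bnd2 : (∑ a : Fin N → U,
          (L_P * ((∏ i, π k (s i) (emp s) (a i)) *
              l1 (fun u => emp a u - nuMF (emp s) (π k) u))
            + (∏ i, π k (s i) (emp s) (a i)) *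
              l1 (fun y => (∑ i, P (s i) (a i) (emp s) (nuMF (emp s) (π k)) y) / ↑N -
                PMF' P (emp s) (π k) y)
            + (∏ i, π k (s i) (emp s) (a i)) *
              (S * l1 (fun x => emp s x - muFlow P π μ₀ k x))))
          ≤ L_P * (Real.sqrt (Fintype.card U) / Real.sqrt N)
            + Real.sqrt (Fintype.card X) / Real.sqrt N
            + S * l1 (fun x => emp s x - muFlow P π μ₀ k x) := by
        rw [Finset.sum_add_distrib, Finset.sum_add_distrib]
        refine add_le_add (add_le_add ?_ fluct3) (le_of_eq ?_)
        · rw [← Finset.mul_sum]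
          exact mul_le_mul_of_nonneg_left fluct2 hLP.le
        · rw [← Finset.sum_mul, hπw1 k s, one_mul]
      refine (add_le_add bnd1 bnd2).trans (le_of_eq ?_)
      rw [hBdef]
      ring
    have dW : ∀ s, 0 ≤ Wproc P π x₀ k s := (hW k).1
    calc ∑ s : Fin N → X, Wproc P π x₀ k s * ∑ a : Fin N → U,
            (∏ i, π k (s i) (emp s) (a i)) *
            ∑ s' : Fin N → X, (∏ i, P (s i) (a i) (emp s) (emp a) (s' i)) *
              l1 (fun x => emp s' x - muFlow P π μ₀ (k+1) x)
        ≤ ∑ s : Fin N → X, Wproc P π x₀ k s *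
            (B + S * l1 (fun x => emp s x - muFlow P π μ₀ k x)) :=
          Finset.sum_le_sum fun s _ => mul_le_mul_of_nonneg_left (perS s) (dW s)
      _ = S * (∑ s : Fin N → X, Wproc P π x₀ k s *
            l1 (fun x => emp s x - muFlow P π μ₀ k x)) + B := by
          have e : ∀ s : Fin N → X, Wproc P π x₀ k s *
              (B + S * l1 (fun x => emp s x - muFlow P π μ₀ k x))
              = B * Wproc P π x₀ k s
                + S * (Wproc P π x₀ k s * l1 (fun x => emp s x - muFlow P π μ₀ k x)) := by
            intro s; ring
          simp_rw [e]
          rw [Finset.sum_add_distrib, ← Finset.mul_sum, ← Finset.mul_sum, (hW k).2, mul_one]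
          ring
  -- main induction
  have main : ∀ k, (∑ s : Fin N → X, Wproc P π x₀ k s *
        l1 (fun x => emp s x - muFlow P π μ₀ k x)) ≤ B * ((S ^ k - 1) / (S - 1)) := by
    intro k
    induction k with
    | zero =>
      have h0 : ∀ s : Fin N → X, Wproc P π x₀ 0 s *
          l1 (fun x => emp s x - muFlow P π μ₀ 0 x)
          = if s = x₀ then l1 (fun x => emp x₀ x - μ₀ x) else 0 := by
        intro s
        simp only [Wproc, muFlow]
        split
        · rename_i hh; rw [hh, one_mul]
        · rw [zero_mul]
      rw [Finset.sum_congr rfl fun s _ => h0 s, Finset.sum_ite_eq' univ x₀]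
      simp [hμ₀, l1]
    | succ k ih =>
      refine (key k).trans ?_
      have h1 : S * (∑ s : Fin N → X, Wproc P π x₀ k s *
          l1 (fun x => emp s x - muFlow P π μ₀ k x)) ≤ S * (B * ((S ^ k - 1) / (S - 1))) :=
        mul_le_mul_of_nonneg_left ih hS0
      refine (add_le_add_left h1 B).trans (le_of_eq ?_)
      have hSne : S - 1 ≠ 0 := by linarith
      field_simp
      ring
  refine (main t).trans ?_
  have hfrac : 0 ≤ (S ^ t - 1) / (S - 1) := by
    apply div_nonneg _ (by linarith)
    have : (1:ℝ) ≤ S ^ t := one_le_pow₀ (by linarith)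
    linarith
  have hBle : B ≤ (2 + L_P) / Real.sqrt N *
      (Real.sqrt (Fintype.card X) + Real.sqrt (Fintype.card U)) := by
    rw [hBdef]
    have e1 : 2 * (Real.sqrt (Fintype.card X) / Real.sqrt N)
        + L_P * (Real.sqrt (Fintype.card U) / Real.sqrt N)
        = (2 * Real.sqrt (Fintype.card X) + L_P * Real.sqrt (Fintype.card U)) / Real.sqrt N := by
      ring
    have e2 : (2 + L_P) / Real.sqrt N *
        (Real.sqrt (Fintype.card X) + Real.sqrt (Fintype.card U))
        = ((2 + L_P) * (Real.sqrt (Fintype.card X) + Real.sqrt (Fintype.card U))) / Real.sqrt N := by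
      ring
    rw [e1, e2, div_le_div_iff₀ hsN hsN]
    have h1 : 0 ≤ Real.sqrt (Fintype.card X) := Real.sqrt_nonneg _
    have h2 : 0 ≤ Real.sqrt (Fintype.card U) := Real.sqrt_nonneg _
    nlinarith [mul_nonneg (mul_nonneg hLP.le h1) hsN.le, mul_nonneg h2 hsN.le,
      mul_nonneg (mul_nonneg hLP.le h2) hsN.le, mul_nonneg h1 hsN.le]
  calc B * ((S ^ t - 1) / (S - 1))
      ≤ ((2 + L_P) / Real.sqrt N *
        (Real.sqrt (Fintype.card X) + Real.sqrt (Fintype.card U))) * ((S ^ t - 1) / (S - 1)) :=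
        mul_le_mul_of_nonneg_right hBle hfrac
    _ = _ := by rw [hSdef]
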